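/- The stationary distribution of the deficiency zero network in the paper is the product-form Poisson distribution: pi(x1,x2,x3,x4) = exp(-sum_i c_i) prod_i c_i^{x_i}/x_i!, with c1 = theta1/theta2, c2 = theta3/theta4, c3 = theta1 theta3 theta7 / (theta2 theta4 theta8), c4 = theta3^2 theta5 / (theta4^2 theta6), satisfies Q^T pi = 0 where Q is the transition rate matrix of the network with the eight mass-action reactions. -/

import Mathlib

/-- The product-form Poisson distribution with means
`c1 = θ1/θ2`, `c2 = θ3/θ4`, `c3 = θ1θ3θ7/(θ2θ4θ8)`, `c4 = θ3²θ5/(θ4²θ6)`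
is stationary for the deficiency zero network with the eight mass-action
reactions of the paper: for every state `x ∈ ℕ⁴`, the total probability inflow
equals the total outflow (`Qᵀ π = 0`). -/
theorem deficiency_zero_product_form_stationary
    (θ1 θ2 θ3 θ4 θ5 θ6 θ7 θ8 : ℝ)
    (h1 : 0 < θ1) (h2 : 0 < θ2) (h3 : 0 < θ3) (h4 : 0 < θ4)
    (h5 : 0 < θ5) (h6 : 0 < θ6) (h7 : 0 < θ7) (h8 : 0 < θ8)
    (c1 c2 c3 c4 : ℝ)
    (hc1 : c1 = θ1 / θ2) (hc2 : c2 = θ3 / θ4)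
    (hc3 : c3 = θ1 * θ3 * θ7 / (θ2 * θ4 * θ8))
    (hc4 : c4 = θ3 ^ 2 * θ5 / (θ4 ^ 2 * θ6))
    (π : ℕ → ℕ → ℕ → ℕ → ℝ)
    (hπ : ∀ x1 x2 x3 x4 : ℕ,
      π x1 x2 x3 x4 = Real.exp (-(c1 + c2 + c3 + c4))
        * (c1 ^ x1 / (Nat.factorial x1)) * (c2 ^ x2 / (Nat.factorial x2))
        * (c3 ^ x3 / (Nat.factorial x3)) * (c4 ^ x4 / (Nat.factorial x4))) :
    ∀ x1 x2 x3 x4 : ℕ,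
      -- inflow from reaction 1: ∅ → S1
      ((if 1 ≤ x1 then θ1 * π (x1 - 1) x2 x3 x4 else 0)
      -- inflow from reaction 2: S1 → ∅
        + θ2 * (x1 + 1 : ℕ) * π (x1 + 1) x2 x3 x4
      -- inflow from reaction 3: ∅ → S2
        + (if 1 ≤ x2 then θ3 * π x1 (x2 - 1) x3 x4 else 0)
      -- inflow from reaction 4: S2 → ∅
        + θ4 * (x2 + 1 : ℕ) * π x1 (x2 + 1) x3 x4
      -- inflow from reaction 5: 2S2 → S4
        + (if 1 ≤ x4 then θ5 * ((x2 + 2 : ℕ) * (x2 + 1 : ℕ))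
            * π x1 (x2 + 2) x3 (x4 - 1) else 0)
      -- inflow from reaction 6: S4 → 2S2
        + (if 2 ≤ x2 then θ6 * (x4 + 1 : ℕ) * π x1 (x2 - 2) x3 (x4 + 1) else 0)
      -- inflow from reaction 7: S1 + S2 → S3
        + (if 1 ≤ x3 then θ7 * ((x1 + 1 : ℕ) * (x2 + 1 : ℕ))
            * π (x1 + 1) (x2 + 1) (x3 - 1) x4 else 0)
      -- inflow from reaction 8: S3 → S1 + S2
        + (if 1 ≤ x1 ∧ 1 ≤ x2 then θ8 * (x3 + 1 : ℕ)
            * π (x1 - 1) (x2 - 1) (x3 + 1) x4 else 0))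
      -- total outflow
      = (θ1 + θ2 * x1 + θ3 + θ4 * x2 + θ5 * (x2 * (x2 - 1) : ℕ)
          + θ6 * x4 + θ7 * (x1 * x2 : ℕ) + θ8 * x3) * π x1 x2 x3 x4 := by
  have key1 : ∀ a b c d : ℕ, ((a:ℝ)+1) * π (a+1) b c d = c1 * π a b c d := by
    intro a b c d
    rw [hπ, hπ, Nat.factorial_succ]
    have hfa : (Nat.factorial a : ℝ) ≠ 0 := by exact_mod_cast a.factorial_ne_zero
    have hfb : (Nat.factorial b : ℝ) ≠ 0 := by exact_mod_cast b.factorial_ne_zero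
    have hfc : (Nat.factorial c : ℝ) ≠ 0 := by exact_mod_cast c.factorial_ne_zero
    have hfd : (Nat.factorial d : ℝ) ≠ 0 := by exact_mod_cast d.factorial_ne_zero
    have ha1 : ((a:ℝ)+1) ≠ 0 := by positivity
    push_cast; field_simp; ring
  have key2 : ∀ a b c d : ℕ, ((b:ℝ)+1) * π a (b+1) c d = c2 * π a b c d := by
    intro a b c d
    rw [hπ, hπ, Nat.factorial_succ]
    have hfa : (Nat.factorial a : ℝ) ≠ 0 := by exact_mod_cast a.factorial_ne_zero
    have hfb : (Nat.factorial b : ℝ) ≠ 0 := by exact_mod_cast b.factorial_ne_zero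
    have hfc : (Nat.factorial c : ℝ) ≠ 0 := by exact_mod_cast c.factorial_ne_zero
    have hfd : (Nat.factorial d : ℝ) ≠ 0 := by exact_mod_cast d.factorial_ne_zero
    have hb1 : ((b:ℝ)+1) ≠ 0 := by positivity
    push_cast; field_simp; ring
  have key3 : ∀ a b c d : ℕ, ((c:ℝ)+1) * π a b (c+1) d = c3 * π a b c d := by
    intro a b c d
    rw [hπ, hπ, Nat.factorial_succ]
    have hfa : (Nat.factorial a : ℝ) ≠ 0 := by exact_mod_cast a.factorial_ne_zero
    have hfb : (Nat.factorial b : ℝ) ≠ 0 := by exact_mod_cast b.factorial_ne_zero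
    have hfc : (Nat.factorial c : ℝ) ≠ 0 := by exact_mod_cast c.factorial_ne_zero
    have hfd : (Nat.factorial d : ℝ) ≠ 0 := by exact_mod_cast d.factorial_ne_zero
    have hcc : ((c:ℝ)+1) ≠ 0 := by positivity
    push_cast; field_simp; ring
  have key4 : ∀ a b c d : ℕ, ((d:ℝ)+1) * π a b c (d+1) = c4 * π a b c d := by
    intro a b c d
    rw [hπ, hπ, Nat.factorial_succ]
    have hfa : (Nat.factorial a : ℝ) ≠ 0 := by exact_mod_cast a.factorial_ne_zero
    have hfb : (Nat.factorial b : ℝ) ≠ 0 := by exact_mod_cast b.factorial_ne_zero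
    have hfc : (Nat.factorial c : ℝ) ≠ 0 := by exact_mod_cast c.factorial_ne_zero
    have hfd : (Nat.factorial d : ℝ) ≠ 0 := by exact_mod_cast d.factorial_ne_zero
    have hdd : ((d:ℝ)+1) ≠ 0 := by positivity
    push_cast; field_simp; ring
  have key22 : ∀ a b c d : ℕ,
      (((b:ℝ)+2)*((b:ℝ)+1)) * π a (b+2) c d = c2^2 * π a b c d := by
    intro a b c d
    have k1 := key2 a (b+1) c d
    have k2 := key2 a b c d
    push_cast at k1
    simp only [show b+1+1 = b+2 from rfl] at k1
    linear_combination ((b:ℝ)+1) * k1 + c2 * k2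
  have e1 : θ2 * c1 = θ1 := by rw [hc1]; field_simp
  have e2 : θ4 * c2 = θ3 := by rw [hc2]; field_simp
  have e3 : θ6 * c4 = θ5 * c2 ^ 2 := by
    rw [hc2, hc4]; field_simp
  have e4 : θ8 * c3 = θ7 * (c1 * c2) := by
    rw [hc1, hc2, hc3]; field_simp
  intro x1 x2 x3 x4
  have T1 : (if 1 ≤ x1 then θ1 * π (x1 - 1) x2 x3 x4 else 0)
      = θ2 * (x1 : ℝ) * π x1 x2 x3 x4 := by
    rcases x1 with _ | a
    · simp
    · rw [if_pos (by omega : 1 ≤ a + 1)]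
      simp only [Nat.add_sub_cancel]
      push_cast
      linear_combination (- π a x2 x3 x4) * e1 - θ2 * key1 a x2 x3 x4
  have T2 : θ2 * ((x1 + 1 : ℕ) : ℝ) * π (x1 + 1) x2 x3 x4 = θ1 * π x1 x2 x3 x4 := by
    push_cast
    linear_combination θ2 * key1 x1 x2 x3 x4 + π x1 x2 x3 x4 * e1
  have T3 : (if 1 ≤ x2 then θ3 * π x1 (x2 - 1) x3 x4 else 0)
      = θ4 * (x2 : ℝ) * π x1 x2 x3 x4 := by
    rcases x2 with _ | b
    · simp
    · rw [if_pos (by omega : 1 ≤ b + 1)]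
      simp only [Nat.add_sub_cancel]
      push_cast
      linear_combination (- π x1 b x3 x4) * e2 - θ4 * key2 x1 b x3 x4
  have T4 : θ4 * ((x2 + 1 : ℕ) : ℝ) * π x1 (x2 + 1) x3 x4 = θ3 * π x1 x2 x3 x4 := by
    push_cast
    linear_combination θ4 * key2 x1 x2 x3 x4 + π x1 x2 x3 x4 * e2
  have T5 : (if 1 ≤ x4 then θ5 * (((x2 + 2 : ℕ) : ℝ) * ((x2 + 1 : ℕ) : ℝ))
        * π x1 (x2 + 2) x3 (x4 - 1) else 0)
      = θ6 * (x4 : ℝ) * π x1 x2 x3 x4 := by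
    rcases x4 with _ | d
    · simp
    · rw [if_pos (by omega : 1 ≤ d + 1)]
      simp only [Nat.add_sub_cancel]
      push_cast
      linear_combination θ5 * key22 x1 x2 x3 d - π x1 x2 x3 d * e3
        - θ6 * key4 x1 x2 x3 d
  have T6 : (if 2 ≤ x2 then θ6 * ((x4 + 1 : ℕ) : ℝ) * π x1 (x2 - 2) x3 (x4 + 1) else 0)
      = θ5 * ((x2 * (x2 - 1) : ℕ) : ℝ) * π x1 x2 x3 x4 := by
    rcases x2 with _ | b
    · simp
    rcases b with _ | b
    · simp
    · rw [if_pos (by omega : 2 ≤ b + 1 + 1)]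
      simp only [show b + 1 + 1 - 2 = b from rfl, show b + 1 + 1 - 1 = b + 1 from rfl,
        show b + 1 + 1 = b + 2 from rfl]
      push_cast
      linear_combination θ6 * key4 x1 b x3 x4 + π x1 b x3 x4 * e3
        - θ5 * key22 x1 b x3 x4
  have T7 : (if 1 ≤ x3 then θ7 * (((x1 + 1 : ℕ) : ℝ) * ((x2 + 1 : ℕ) : ℝ))
        * π (x1 + 1) (x2 + 1) (x3 - 1) x4 else 0)
      = θ8 * (x3 : ℝ) * π x1 x2 x3 x4 := by
    rcases x3 with _ | c
    · simp
    · rw [if_pos (by omega : 1 ≤ c + 1)]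
      simp only [Nat.add_sub_cancel]
      push_cast
      have k1 := key1 x1 x2 c x4
      have k2 := key2 (x1 + 1) x2 c x4
      have k3 := key3 x1 x2 c x4
      push_cast at k2
      linear_combination θ7 * ((x1:ℝ)+1) * k2 + θ7 * c2 * k1
        - π x1 x2 c x4 * e4 - θ8 * k3
  have T8 : (if 1 ≤ x1 ∧ 1 ≤ x2 then θ8 * ((x3 + 1 : ℕ) : ℝ)
        * π (x1 - 1) (x2 - 1) (x3 + 1) x4 else 0)
      = θ7 * ((x1 * x2 : ℕ) : ℝ) * π x1 x2 x3 x4 := by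
    rcases x1 with _ | a
    · simp
    rcases x2 with _ | b
    · simp
    · rw [if_pos ⟨by omega, by omega⟩]
      simp only [Nat.add_sub_cancel]
      push_cast
      have k1 := key1 a (b + 1) x3 x4
      have k2 := key2 a b x3 x4
      have k3 := key3 a b x3 x4
      linear_combination θ8 * k3 + π a b x3 x4 * e4
        - θ7 * ((b:ℝ)+1) * k1 - θ7 * c1 * k2
  rw [T1, T2, T3, T4, T5, T6, T7, T8]
  push_cast
  ring
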